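/- Define the operator Υ by ΥF = X(TF) − T(XF) for smooth F : ℂ² → ℂ. Then at every point p ∈ S: (Υz₁)(p) = −p₁, (Υz₂)(p) = −p₂, (Υw₁)(p) = w₁(p), and (Υw₂)(p) = w₂(p), where z₁, z₂ denote the coordinate functions. -/

import Mathlib

open Complex

/-- Wirtinger derivative ∂F/∂z_j at p. -/
noncomputable def wirtZ {n : ℕ} (F : (Fin n → ℂ) → ℂ) (p : Fin n → ℂ) (j : Fin n) : ℂ :=
  (1/2) * (fderiv ℝ F p (Pi.single j 1) - I * fderiv ℝ F p (Pi.single j I))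

/-- Wirtinger derivative ∂F/∂z̄_j at p. -/
noncomputable def wirtZbar {n : ℕ} (F : (Fin n → ℂ) → ℂ) (p : Fin n → ℂ) (j : Fin n) : ℂ :=
  (1/2) * (fderiv ℝ F p (Pi.single j 1) + I * fderiv ℝ F p (Pi.single j I))

/-- The projective dual coordinates w_j(z) = (∂ρ/∂z_j)/(Σ_k z_k ∂ρ/∂z_k). -/
noncomputable def wC {n : ℕ} (ρ : (Fin n → ℂ) → ℝ) (z : Fin n → ℂ) (j : Fin n) : ℂ :=
  wirtZ (fun q => (ρ q : ℂ)) z j / ∑ k, z k * wirtZ (fun q => (ρ q : ℂ)) z k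

/-- The operator T F = w₂ ∂F/∂z₁ − w₁ ∂F/∂z₂ + α₁ ∂F/∂z̄₁ + α₂ ∂F/∂z̄₂. -/
noncomputable def Top2 (ρ : (Fin 2 → ℂ) → ℝ) (α : (Fin 2 → ℂ) → Fin 2 → ℂ)
    (F : (Fin 2 → ℂ) → ℂ) (p : Fin 2 → ℂ) : ℂ :=
  wC ρ p 1 * wirtZ F p 0 - wC ρ p 0 * wirtZ F p 1
    + α p 0 * wirtZbar F p 0 + α p 1 * wirtZbar F p 1

/-- The operator X F = b₁ ∂F/∂z̄₁ + b₂ ∂F/∂z̄₂. -/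
noncomputable def Xop2 (b : (Fin 2 → ℂ) → Fin 2 → ℂ)
    (F : (Fin 2 → ℂ) → ℂ) (p : Fin 2 → ℂ) : ℂ :=
  b p 0 * wirtZbar F p 0 + b p 1 * wirtZbar F p 1

/-! ### Auxiliary lemmas -/

section Aux

open Filter Topology

lemma fderiv_coord' (j : Fin 2) (p : Fin 2 → ℂ) :
    fderiv ℝ (fun z : Fin 2 → ℂ => z j) p
      = ContinuousLinearMap.proj (R := ℝ) (φ := fun _ : Fin 2 => ℂ) j :=
  (ContinuousLinearMap.proj (R := ℝ) (φ := fun _ : Fin 2 => ℂ) j).fderiv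

lemma wirtZ_coord' (j k : Fin 2) (p : Fin 2 → ℂ) :
    wirtZ (fun z => z j) p k = if k = j then 1 else 0 := by
  simp only [wirtZ, fderiv_coord', ContinuousLinearMap.proj_apply, Pi.single_apply]
  rcases eq_or_ne k j with rfl | h
  · simp [Complex.I_mul_I]; ring
  · simp [h, Ne.symm h]

lemma wirtZbar_coord' (j k : Fin 2) (p : Fin 2 → ℂ) :
    wirtZbar (fun z => z j) p k = 0 := by
  simp only [wirtZbar, fderiv_coord', ContinuousLinearMap.proj_apply, Pi.single_apply]
  rcases eq_or_ne k j with rfl | h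
  · simp [Complex.I_mul_I]
  · simp [h, Ne.symm h]

lemma wirtZ_const' (c : ℂ) (p : Fin 2 → ℂ) (k : Fin 2) : wirtZ (fun _ => c) p k = 0 := by
  simp [wirtZ, fderiv_const]

lemma wirtZbar_const' (c : ℂ) (p : Fin 2 → ℂ) (k : Fin 2) : wirtZbar (fun _ => c) p k = 0 := by
  simp [wirtZbar, fderiv_const]

lemma wirtZ_neg' (F : (Fin 2 → ℂ) → ℂ) (p : Fin 2 → ℂ) (k : Fin 2) :
    wirtZ (fun z => -F z) p k = -wirtZ F p k := by
  simp [wirtZ, fderiv_neg]; ring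

lemma wirtZbar_neg' (F : (Fin 2 → ℂ) → ℂ) (p : Fin 2 → ℂ) (k : Fin 2) :
    wirtZbar (fun z => -F z) p k = -wirtZbar F p k := by
  simp [wirtZbar, fderiv_neg]; ring

lemma wirtZ_add' (F G : (Fin 2 → ℂ) → ℂ) (p : Fin 2 → ℂ) (k : Fin 2)
    (hF : DifferentiableAt ℝ F p) (hG : DifferentiableAt ℝ G p) :
    wirtZ (fun z => F z + G z) p k = wirtZ F p k + wirtZ G p k := by
  simp [wirtZ, fderiv_fun_add hF hG]; ring

lemma wirtZbar_add' (F G : (Fin 2 → ℂ) → ℂ) (p : Fin 2 → ℂ) (k : Fin 2)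
    (hF : DifferentiableAt ℝ F p) (hG : DifferentiableAt ℝ G p) :
    wirtZbar (fun z => F z + G z) p k = wirtZbar F p k + wirtZbar G p k := by
  simp [wirtZbar, fderiv_fun_add hF hG]; ring

lemma Top2_add' (ρ : (Fin 2 → ℂ) → ℝ) (α : (Fin 2 → ℂ) → Fin 2 → ℂ)
    (F G : (Fin 2 → ℂ) → ℂ) (p : Fin 2 → ℂ)
    (hF : DifferentiableAt ℝ F p) (hG : DifferentiableAt ℝ G p) :
    Top2 ρ α (fun z => F z + G z) p = Top2 ρ α F p + Top2 ρ α G p := by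
  simp only [Top2, wirtZ_add' F G p _ hF hG, wirtZbar_add' F G p _ hF hG]; ring

/-- If `G` vanishes on the zero set of `ρ` and is differentiable at a point `p` of that zero
set where the gradient of `ρ` does not vanish, then `DG(p)` is a complex multiple of `Dρ(p)`. -/
lemma deriv_factor (ρ : (Fin 2 → ℂ) → ℝ) (p : Fin 2 → ℂ) (hρ : ContDiff ℝ (⊤:ℕ∞) ρ)
    (hp : ρ p = 0) (hgrad : fderiv ℝ ρ p ≠ 0) (G : (Fin 2 → ℂ) → ℂ)
    (hG : ∀ x, ρ x = 0 → G x = 0) (hGd : DifferentiableAt ℝ G p) :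
    ∃ γ : ℂ, ∀ v, fderiv ℝ G p v = (fderiv ℝ ρ p v) • γ := by
  set f' := fderiv ℝ ρ p with hf'def
  have hstrict : HasStrictFDerivAt ρ f' p :=
    hρ.contDiffAt.hasStrictFDerivAt (by simp)
  obtain ⟨u, hu⟩ : ∃ u, f' u ≠ 0 := by
    by_contra h
    push_neg at h
    exact hgrad (ContinuousLinearMap.ext fun v => h v)
  have hsurj : f'.range = ⊤ := by
    rw [LinearMap.range_eq_top]
    intro r
    exact ⟨(r / f' u) • u, by simp [map_smul]; field_simp⟩
  have hker : ∀ v, f' v = 0 → fderiv ℝ G p v = 0 := by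
    intro v hv
    set ψ : f'.ker → (Fin 2 → ℂ) := hstrict.implicitFunction ρ f' hsurj (ρ p) with hψdef
    have hψd : HasStrictFDerivAt ψ (f'.ker).subtypeL 0 :=
      hstrict.to_implicitFunction hsurj
    have hψ0 : ψ 0 = p := hstrict.implicitFunction_apply_image hsurj
    have h2 : Tendsto (fun y : f'.ker => ((ρ p : ℝ), y)) (𝓝 0) (𝓝 (ρ p, 0)) :=
      tendsto_const_nhds.prodMk_nhds tendsto_id
    have heq : ∀ᶠ y : f'.ker in 𝓝 0, ρ (ψ y) = ρ p :=
      h2.eventually (hstrict.map_implicitFunction_eq hsurj)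
    have hG0 : ∀ᶠ y in 𝓝 (0 : f'.ker), (G ∘ ψ) y = 0 :=
      heq.mono fun y hy => hG _ (by rw [hy, hp])
    have hGp : HasFDerivAt G (fderiv ℝ G p) (ψ 0) := by rw [hψ0]; exact hGd.hasFDerivAt
    have hcomp : HasFDerivAt (G ∘ ψ) ((fderiv ℝ G p).comp (f'.ker).subtypeL) 0 :=
      hGp.comp 0 hψd.hasFDerivAt
    have hconst : HasFDerivAt (fun _ : f'.ker => (0 : ℂ))
        ((fderiv ℝ G p).comp (f'.ker).subtypeL) 0 :=
      hcomp.congr_of_eventuallyEq (hG0.mono fun y hy => hy.symm)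
    have hzero : ((fderiv ℝ G p).comp (f'.ker).subtypeL)
        = (0 : f'.ker →L[ℝ] ℂ) :=
      hconst.unique (hasFDerivAt_const 0 0)
    have := ContinuousLinearMap.ext_iff.mp hzero ⟨v, hv⟩
    simpa using this
  refine ⟨(f' u)⁻¹ • fderiv ℝ G p u, fun v => ?_⟩
  have hv0 : f' (v - (f' v / f' u) • u) = 0 := by
    simp only [map_sub, map_smul, smul_eq_mul]
    field_simp
    ring
  have h2 := hker _ hv0
  rw [map_sub, map_smul] at h2
  have h3 := sub_eq_zero.mp h2
  rw [h3, smul_smul, div_eq_mul_inv]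

/-- Wirtinger version of `deriv_factor`. -/
lemma wirt_factor (ρ : (Fin 2 → ℂ) → ℝ) (p : Fin 2 → ℂ) (hρ : ContDiff ℝ (⊤:ℕ∞) ρ)
    (hp : ρ p = 0) (hgrad : fderiv ℝ ρ p ≠ 0) (G : (Fin 2 → ℂ) → ℂ)
    (hG : ∀ x, ρ x = 0 → G x = 0) (hGd : DifferentiableAt ℝ G p) :
    ∃ γ : ℂ, (∀ j, wirtZ G p j = γ * wirtZ (fun q => (ρ q : ℂ)) p j) ∧
      (∀ j, wirtZbar G p j = γ * wirtZbar (fun q => (ρ q : ℂ)) p j) := by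
  obtain ⟨γ, hγ⟩ := deriv_factor ρ p hρ hp hgrad G hG hGd
  have hρC : fderiv ℝ (fun q : Fin 2 → ℂ => (ρ q : ℂ)) p
      = Complex.ofRealCLM.comp (fderiv ℝ ρ p) :=
    (Complex.ofRealCLM.hasFDerivAt.comp p
      ((hρ.differentiable (by simp)) p).hasFDerivAt).fderiv
  refine ⟨γ, fun j => ?_, fun j => ?_⟩ <;>
  · simp only [wirtZ, wirtZbar, hρC, ContinuousLinearMap.comp_apply, ofRealCLM_apply, hγ,
      real_smul]
    ring

end Aux

theorem upsilon_on_coordinates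
    (ρ : (Fin 2 → ℂ) → ℝ) (hρ : ContDiff ℝ (⊤ : ℕ∞) ρ)
    (S : Set (Fin 2 → ℂ)) (hSdef : S = ρ ⁻¹' {0}) (hSne : S.Nonempty)
    (hDρ : ∀ p ∈ S, fderiv ℝ ρ p ≠ 0)
    (hsum : ∀ p ∈ S, (∑ k, p k * wirtZ (fun q => (ρ q : ℂ)) p k) ≠ 0)
    (α b : (Fin 2 → ℂ) → Fin 2 → ℂ)
    (hα : ContDiff ℝ (⊤ : ℕ∞) α) (hb : ContDiff ℝ (⊤ : ℕ∞) b)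
    (hαtan : ∀ p ∈ S,
      α p 0 * wirtZbar (fun q => (ρ q : ℂ)) p 0 + α p 1 * wirtZbar (fun q => (ρ q : ℂ)) p 1 = 0)
    (hbtan : ∀ p ∈ S,
      b p 0 * wirtZbar (fun q => (ρ q : ℂ)) p 0 + b p 1 * wirtZbar (fun q => (ρ q : ℂ)) p 1 = 0)
    (hTw1 : ∀ p ∈ S, Top2 ρ α (fun z => wC ρ z 0) p = 0)
    (hTw2 : ∀ p ∈ S, Top2 ρ α (fun z => wC ρ z 1) p = 0)
    (hXw1 : ∀ p ∈ S, Xop2 b (fun z => wC ρ z 0) p = p 1)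
    (hXw2 : ∀ p ∈ S, Xop2 b (fun z => wC ρ z 1) p = -(p 0))
    : ∀ p ∈ S,
      (Xop2 b (Top2 ρ α (fun z => z 0)) p - Top2 ρ α (Xop2 b (fun z => z 0)) p = -(p 0)) ∧
      (Xop2 b (Top2 ρ α (fun z => z 1)) p - Top2 ρ α (Xop2 b (fun z => z 1)) p = -(p 1)) ∧
      (Xop2 b (Top2 ρ α (fun z => wC ρ z 0)) p - Top2 ρ α (Xop2 b (fun z => wC ρ z 0)) p = wC ρ p 0) ∧
      (Xop2 b (Top2 ρ α (fun z => wC ρ z 1)) p - Top2 ρ α (Xop2 b (fun z => wC ρ z 1)) p = wC ρ p 1) := by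
  intro p hp
  have hρ0 : ρ p = 0 := by
    have := hSdef ▸ hp; simpa using this
  -- membership translation
  have hmem : ∀ x : Fin 2 → ℂ, ρ x = 0 → x ∈ S := by
    intro x hx; rw [hSdef]; simpa using hx
  -- notation
  set ρC : (Fin 2 → ℂ) → ℂ := fun q => (ρ q : ℂ) with hρCdef
  -- smoothness infrastructure
  have hρCsmooth : ContDiff ℝ (⊤:ℕ∞) ρC := Complex.ofRealCLM.contDiff.comp hρ
  have hfdC : ContDiff ℝ (⊤:ℕ∞) (fderiv ℝ ρC) := (contDiff_infty_iff_fderiv.mp hρCsmooth).2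
  have hwz : ∀ j : Fin 2, ContDiff ℝ (⊤:ℕ∞) (fun q => wirtZ ρC q j) := by
    intro j
    unfold wirtZ
    exact contDiff_const.mul ((hfdC.clm_apply contDiff_const).sub
      (contDiff_const.mul (hfdC.clm_apply contDiff_const)))
  have hcoord : ∀ j : Fin 2, ContDiff ℝ (⊤:ℕ∞) (fun q : Fin 2 → ℂ => q j) := fun j =>
    (ContinuousLinearMap.proj (R := ℝ) (φ := fun _ : Fin 2 => ℂ) j).contDiff
  have hden : ContDiff ℝ (⊤:ℕ∞) (fun q => ∑ k, q k * wirtZ ρC q k) :=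
    ContDiff.sum fun k _ => (hcoord k).mul (hwz k)
  have hdenp : (∑ k, p k * wirtZ ρC p k) ≠ 0 := hsum p hp
  have hwCp : ∀ j : Fin 2, ContDiffAt ℝ (⊤:ℕ∞) (fun q => wC ρ q j) p := by
    intro j
    unfold wC
    simp only [div_eq_mul_inv]
    exact (hwz j).contDiffAt.mul (hden.contDiffAt.inv hdenp)
  have hfdW : ∀ j : Fin 2, ContDiffAt ℝ (⊤:ℕ∞) (fderiv ℝ (fun q => wC ρ q j)) p := fun j =>
    (hwCp j).fderiv_right (by exact_mod_cast le_top)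
  have hwzW : ∀ j k : Fin 2, ContDiffAt ℝ (⊤:ℕ∞) (fun q => wirtZ (fun z => wC ρ z j) q k) p := by
    intro j k
    unfold wirtZ
    exact contDiffAt_const.mul (((hfdW j).clm_apply contDiffAt_const).sub
      (contDiffAt_const.mul ((hfdW j).clm_apply contDiffAt_const)))
  have hwbW : ∀ j k : Fin 2, ContDiffAt ℝ (⊤:ℕ∞) (fun q => wirtZbar (fun z => wC ρ z j) q k) p := by
    intro j k
    unfold wirtZbar
    exact contDiffAt_const.mul (((hfdW j).clm_apply contDiffAt_const).add
      (contDiffAt_const.mul ((hfdW j).clm_apply contDiffAt_const)))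
  have hαc : ∀ j : Fin 2, ContDiff ℝ (⊤:ℕ∞) (fun q => α q j) := fun j => contDiff_pi.mp hα j
  have hbc : ∀ j : Fin 2, ContDiff ℝ (⊤:ℕ∞) (fun q => b q j) := fun j => contDiff_pi.mp hb j
  have hone : (1 : WithTop ℕ∞) ≤ ((⊤:ℕ∞) : WithTop ℕ∞) := by exact_mod_cast le_top
  have hTWd : ∀ j : Fin 2, DifferentiableAt ℝ (Top2 ρ α (fun z => wC ρ z j)) p := by
    intro j
    have : ContDiffAt ℝ (⊤:ℕ∞) (fun q => Top2 ρ α (fun z => wC ρ z j) q) p := by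
      unfold Top2
      exact ((((hwCp 1).mul (hwzW j 0)).sub ((hwCp 0).mul (hwzW j 1))).add
        (((hαc 0).contDiffAt).mul (hwbW j 0))).add (((hαc 1).contDiffAt).mul (hwbW j 1))
    exact this.differentiableAt (by simp)
  have hXWd : ∀ j : Fin 2, DifferentiableAt ℝ (Xop2 b (fun z => wC ρ z j)) p := by
    intro j
    have : ContDiffAt ℝ (⊤:ℕ∞) (fun q => Xop2 b (fun z => wC ρ z j) q) p := by
      unfold Xop2
      exact (((hbc 0).contDiffAt).mul (hwbW j 0)).add (((hbc 1).contDiffAt).mul (hwbW j 1))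
    exact this.differentiableAt (by simp)
  have hcoordd : ∀ j : Fin 2, DifferentiableAt ℝ (fun q : Fin 2 → ℂ => q j) p := fun j =>
    ((hcoord j).differentiable (by simp)) p
  -- the key vanishing lemma
  have key : ∀ G : (Fin 2 → ℂ) → ℂ, (∀ x ∈ S, G x = 0) → DifferentiableAt ℝ G p →
      Xop2 b G p = 0 ∧ Top2 ρ α G p = 0 := by
    intro G hGS hGd
    obtain ⟨γ, h1, h2⟩ := wirt_factor ρ p hρ hρ0 (hDρ p hp) G
      (fun x hx => hGS x (hmem x hx)) hGd
    constructor
    · show b p 0 * wirtZbar G p 0 + b p 1 * wirtZbar G p 1 = 0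
      rw [h2 0, h2 1]
      linear_combination γ * (hbtan p hp)
    · show wC ρ p 1 * wirtZ G p 0 - wC ρ p 0 * wirtZ G p 1
        + α p 0 * wirtZbar G p 0 + α p 1 * wirtZbar G p 1 = 0
      rw [h1 0, h1 1, h2 0, h2 1]
      simp only [wC]
      linear_combination γ * (hαtan p hp)
  -- computations with coordinate functions
  have hz0T : Top2 ρ α (fun z => z 0) = fun q => wC ρ q 1 := by
    funext q
    simp [Top2, wirtZ_coord', wirtZbar_coord']
  have hz1T : Top2 ρ α (fun z => z 1) = fun q => -wC ρ q 0 := by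
    funext q
    simp [Top2, wirtZ_coord', wirtZbar_coord']
  have hz0X : Xop2 b (fun z => z 0) = fun _ => (0:ℂ) := by
    funext q; simp [Xop2, wirtZbar_coord']
  have hz1X : Xop2 b (fun z => z 1) = fun _ => (0:ℂ) := by
    funext q; simp [Xop2, wirtZbar_coord']
  have hT0 : Top2 ρ α (fun _ => (0:ℂ)) p = 0 := by
    simp [Top2, wirtZ_const', wirtZbar_const']
  have hTz1 : Top2 ρ α (fun q : Fin 2 → ℂ => q 1) p = -wC ρ p 0 := by
    simp [Top2, wirtZ_coord', wirtZbar_coord']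
  have hTz0neg : Top2 ρ α (fun q : Fin 2 → ℂ => -(q 0)) p = -wC ρ p 1 := by
    have h1 : ∀ k, wirtZ (fun q : Fin 2 → ℂ => -(q 0)) p k = -wirtZ (fun q : Fin 2 → ℂ => q 0) p k :=
      fun k => wirtZ_neg' (fun q => q 0) p k
    have h2 : ∀ k, wirtZbar (fun q : Fin 2 → ℂ => -(q 0)) p k
        = -wirtZbar (fun q : Fin 2 → ℂ => q 0) p k := fun k => wirtZbar_neg' (fun q => q 0) p k
    show wC ρ p 1 * wirtZ _ p 0 - wC ρ p 0 * wirtZ _ p 1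
        + α p 0 * wirtZbar _ p 0 + α p 1 * wirtZbar _ p 1 = -wC ρ p 1
    rw [h1 0, h1 1, h2 0, h2 1, wirtZ_coord', wirtZ_coord', wirtZbar_coord', wirtZbar_coord']
    norm_num
  have hXneg : Xop2 b (fun q : Fin 2 → ℂ => -(wC ρ q 0)) p = -Xop2 b (fun z => wC ρ z 0) p := by
    show b p 0 * wirtZbar _ p 0 + b p 1 * wirtZbar _ p 1 = _
    rw [wirtZbar_neg' (fun q => wC ρ q 0) p 0, wirtZbar_neg' (fun q => wC ρ q 0) p 1]
    show _ = -(b p 0 * wirtZbar (fun z => wC ρ z 0) p 0 + b p 1 * wirtZbar (fun z => wC ρ z 0) p 1)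
    ring
  refine ⟨?_, ?_, ?_, ?_⟩
  -- Υ z₁ = -z₁
  · rw [hz0T, hz0X, hT0, hXw2 p hp]
    ring
  -- Υ z₂ = -z₂
  · rw [hz1T, hz1X, hT0, hXneg, hXw1 p hp]
    ring
  -- Υ w₁ = w₁
  · have hA := (key (Top2 ρ α (fun z => wC ρ z 0)) hTw1 (hTWd 0)).1
    set G₂ : (Fin 2 → ℂ) → ℂ := fun q => Xop2 b (fun z => wC ρ z 0) q - q 1 with hG₂def
    have hG₂S : ∀ x ∈ S, G₂ x = 0 := by
      intro x hx; simp only [hG₂def, hXw1 x hx, sub_self]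
    have hG₂d : DifferentiableAt ℝ G₂ p := (hXWd 0).sub (hcoordd 1)
    have hB := (key G₂ hG₂S hG₂d).2
    have hsplit : Xop2 b (fun z => wC ρ z 0) = fun q => G₂ q + q 1 :=
      funext fun q => by simp [hG₂def]
    have hTB : Top2 ρ α (Xop2 b (fun z => wC ρ z 0)) p
        = Top2 ρ α G₂ p + Top2 ρ α (fun q : Fin 2 → ℂ => q 1) p := by
      rw [hsplit]
      exact Top2_add' ρ α G₂ (fun q => q 1) p hG₂d (hcoordd 1)
    rw [hA, hTB, hB, hTz1]
    ring
  -- Υ w₂ = w₂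
  · have hA := (key (Top2 ρ α (fun z => wC ρ z 1)) hTw2 (hTWd 1)).1
    set G₃ : (Fin 2 → ℂ) → ℂ := fun q => Xop2 b (fun z => wC ρ z 1) q + q 0 with hG₃def
    have hG₃S : ∀ x ∈ S, G₃ x = 0 := by
      intro x hx; simp only [hG₃def, hXw2 x hx, neg_add_cancel]
    have hG₃d : DifferentiableAt ℝ G₃ p := (hXWd 1).add (hcoordd 0)
    have hB := (key G₃ hG₃S hG₃d).2
    have hsplit : Xop2 b (fun z => wC ρ z 1) = fun q => G₃ q + -(q 0) :=
      funext fun q => by simp [hG₃def]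
    have hTB : Top2 ρ α (Xop2 b (fun z => wC ρ z 1)) p
        = Top2 ρ α G₃ p + Top2 ρ α (fun q : Fin 2 → ℂ => -(q 0)) p := by
      rw [hsplit]
      exact Top2_add' ρ α G₃ (fun q => -(q 0)) p hG₃d (hcoordd 0).neg
    rw [hA, hTB, hB, hTz0neg]
    ring
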